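/- For any step size τ > 0 and complex number z with Re(z) > 0, if g : [0,∞) → ℂ is the continuous piecewise linear function with nodes g(nτ) = g_n for n ≥ 0 and g_0 = 0, and the sequence (g_n) is bounded, then the Laplace transform of g satisfies ∫₀^∞ g(t) e^{-zt} dt = ((e^{-τz} + e^{τz} - 2)/(z² τ)) · ∑_{n=0}^∞ g_n e^{-nτz}. -/

import Mathlib

open MeasureTheory


lemma lt_hasDerivAt_aux (z d e : ℂ) (hz : z ≠ 0) (t : ℝ) :
    HasDerivAt (fun t : ℝ => -((d + e * t) / z + e / z ^ 2) * Complex.exp (-(z * t)))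
      ((d + e * t) * Complex.exp (-(z * t))) t := by
  have ht : HasDerivAt (fun t : ℝ => (t : ℂ)) 1 t := by
    exact Complex.ofRealCLM.hasDerivAt (x := t)
  have h1 : HasDerivAt (fun t : ℝ => -((d + e * (t : ℂ)) / z + e / z ^ 2)) (-(e / z)) t := by
    have h := (((ht.const_mul e).const_add d).div_const z).add_const (e / z ^ 2)
    have := h.neg
    simp only [mul_one] at this
    exact this
  have h2 : HasDerivAt (fun t : ℝ => Complex.exp (-(z * t))) (Complex.exp (-(z * t)) * (-z)) t := by
    have hf : HasDerivAt (fun t : ℝ => -(z * (t : ℂ))) (-z) t := by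
      have := (ht.const_mul z).neg
      simp only [mul_one] at this
      exact this
    exact (Complex.hasDerivAt_exp _).comp t hf
  have := h1.mul h2
  refine this.congr_deriv ?_
  field_simp
  ring

lemma lt_seg_integral (z : ℂ) (hz : z ≠ 0) (τ : ℝ) (hτ : τ ≠ 0) (a : ℝ) (c₁ c₂ : ℂ) :
    ∫ t in a..(a + τ), (c₁ + c₂ * (((t - a) / τ : ℝ) : ℂ)) * Complex.exp (-(z * t))
      = (c₁ / z + c₂ / (τ * z ^ 2)) * Complex.exp (-(z * a))
        - ((c₁ + c₂) / z + c₂ / (τ * z ^ 2)) * Complex.exp (-(z * (a + τ))) := by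
  set d : ℂ := c₁ - c₂ * a / τ with hd
  set e : ℂ := c₂ / τ with he
  have hcong : ∀ t : ℝ, (c₁ + c₂ * (((t - a) / τ : ℝ) : ℂ)) * Complex.exp (-(z * t))
      = (d + e * t) * Complex.exp (-(z * t)) := by
    intro t
    have hτ' : (τ : ℂ) ≠ 0 := Complex.ofReal_ne_zero.mpr hτ
    congr 1
    rw [hd, he]
    push_cast
    field_simp
    ring
  rw [show (∫ t in a..(a + τ), (c₁ + c₂ * (((t - a) / τ : ℝ) : ℂ)) * Complex.exp (-(z * t)))
      = ∫ t in a..(a + τ), (d + e * t) * Complex.exp (-(z * t)) from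
    intervalIntegral.integral_congr fun t _ => hcong t]
  have hint : IntervalIntegrable (fun t : ℝ => (d + e * t) * Complex.exp (-(z * t))) volume a (a + τ) := by
    apply Continuous.intervalIntegrable
    exact (continuous_const.add (continuous_const.mul Complex.continuous_ofReal)).mul
      (Complex.continuous_exp.comp ((continuous_const.mul Complex.continuous_ofReal).neg))
  rw [intervalIntegral.integral_eq_sub_of_hasDerivAt (fun t _ => lt_hasDerivAt_aux z d e hz t) hint]
  have hτ' : (τ : ℂ) ≠ 0 := Complex.ofReal_ne_zero.mpr hτ
  have e1 : (((a + τ : ℝ)) : ℂ) = (a : ℂ) + τ := by push_cast; ring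
  rw [hd, he, e1]
  set E1 := Complex.exp (-(z * ((a : ℂ) + τ))) with hE1
  set E0 := Complex.exp (-(z * (a : ℂ))) with hE0
  field_simp [hτ', hz]
  ring

/-- Laplace transform of the continuous piecewise linear interpolant of a bounded
sequence `gs` (with `gs 0 = 0`) on a grid of step size `τ`, for `Re z > 0`:
`∫₀^∞ g(t) e^{-zt} dt = ((e^{-τz} + e^{τz} - 2)/(z² τ)) · ∑_{n=0}^∞ gs n e^{-nτz}`. -/
theorem laplace_transform_piecewise_linear
    (τ : ℝ) (hτ : 0 < τ) (z : ℂ) (hz : 0 < z.re)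
    (gs : ℕ → ℂ) (hg0 : gs 0 = 0) (M : ℝ) (hbdd : ∀ n, ‖gs n‖ ≤ M)
    (g : ℝ → ℂ)
    (hg : ∀ n : ℕ, ∀ t ∈ Set.Icc ((n : ℝ) * τ) (((n : ℝ) + 1) * τ),
      g t = gs n + (gs (n + 1) - gs n) * ((t - (n : ℝ) * τ) / τ)) :
    ∫ t in Set.Ioi (0 : ℝ), g t * Complex.exp (-(z * t))
      = ((Complex.exp (-(τ * z)) + Complex.exp (τ * z) - 2) / (z ^ 2 * τ))
          * ∑' n : ℕ, gs n * Complex.exp (-((n : ℂ) * τ * z)) := by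
  have hz0 : z ≠ 0 := fun h => by simp [h] at hz
  have hτ' : (τ : ℂ) ≠ 0 := Complex.ofReal_ne_zero.mpr hτ.ne'
  have hM0 : 0 ≤ M := le_trans (norm_nonneg (gs 0)) (hbdd 0)
  -- the interpolant as a globally defined measurable function
  set f : ℝ → ℂ := fun t =>
    gs ⌊t / τ⌋₊ + (gs (⌊t / τ⌋₊ + 1) - gs ⌊t / τ⌋₊) * (((t - (⌊t / τ⌋₊ : ℝ) * τ) / τ : ℝ) : ℂ)
    with hf_def
  have hmem : ∀ t : ℝ, 0 ≤ t →
      t ∈ Set.Icc ((⌊t / τ⌋₊ : ℝ) * τ) (((⌊t / τ⌋₊ : ℝ) + 1) * τ) := by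
    intro t ht
    have h1 : ((⌊t / τ⌋₊ : ℝ)) ≤ t / τ := Nat.floor_le (div_nonneg ht hτ.le)
    have h2 : t / τ < (⌊t / τ⌋₊ : ℝ) + 1 := Nat.lt_floor_add_one _
    constructor
    · calc ((⌊t / τ⌋₊ : ℝ)) * τ ≤ (t / τ) * τ := mul_le_mul_of_nonneg_right h1 hτ.le
        _ = t := by field_simp
    · calc t = (t / τ) * τ := by field_simp
        _ ≤ ((⌊t / τ⌋₊ : ℝ) + 1) * τ := mul_le_mul_of_nonneg_right h2.le hτ.le
  have hgf : ∀ t : ℝ, 0 ≤ t → g t = f t := by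
    intro t ht
    rw [hg ⌊t / τ⌋₊ t (hmem t ht), hf_def]
    push_cast
    ring
  have hmeasf : Measurable f := by
    have hfloor : Measurable fun t : ℝ => (⌊t / τ⌋₊ : ℕ) :=
      Nat.measurable_floor.comp (measurable_id.div_const τ)
    have hnat : ∀ u : ℕ → ℂ, Measurable fun t : ℝ => u ⌊t / τ⌋₊ := fun u =>
      (measurable_from_nat (f := u)).comp hfloor
    have hcastfloor : Measurable fun t : ℝ => ((⌊t / τ⌋₊ : ℝ)) :=
      measurable_from_nat.comp hfloor
    apply Measurable.add (hnat gs)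
    apply Measurable.mul (((hnat fun n => gs (n + 1))).sub (hnat gs))
    exact Complex.measurable_ofReal.comp
      (((measurable_id.sub (hcastfloor.mul_const τ)).div_const τ))
  -- integrability
  have hgb : ∀ t : ℝ, 0 ≤ t → ‖g t‖ ≤ 3 * M := by
    intro t ht
    rw [hgf t ht]
    set n := ⌊t / τ⌋₊
    have hmem' := hmem t ht
    have habs : |(t - (n : ℝ) * τ) / τ| ≤ 1 := by
      rw [abs_div, abs_of_pos hτ, div_le_one hτ, abs_le]
      constructor <;> nlinarith [hmem'.1, hmem'.2]
    calc ‖gs n + (gs (n + 1) - gs n) * (((t - (n : ℝ) * τ) / τ : ℝ) : ℂ)‖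
        ≤ ‖gs n‖ + ‖gs (n + 1) - gs n‖ * ‖(((t - (n : ℝ) * τ) / τ : ℝ) : ℂ)‖ := by
          refine (norm_add_le _ _).trans ?_
          rw [norm_mul]
      _ ≤ M + (M + M) * 1 := by
          gcongr
          · exact hbdd n
          · exact (norm_sub_le _ _).trans (add_le_add (hbdd (n + 1)) (hbdd n))
          · rwa [Complex.norm_real, Real.norm_eq_abs]
      _ = 3 * M := by ring
  have hre : ∀ t : ℝ, ‖Complex.exp (-(z * t))‖ = Real.exp (-z.re * t) := by
    intro t
    rw [Complex.norm_exp]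
    congr 1
    simp [Complex.mul_re]
  have hInt : IntegrableOn (fun t => g t * Complex.exp (-(z * t))) (Set.Ioi 0) := by
    apply Integrable.mono' (((exp_neg_integrableOn_Ioi 0 hz).const_mul (3 * M)))
    · have hexp : Measurable fun t : ℝ => Complex.exp (-(z * t)) :=
        Complex.measurable_exp.comp ((Complex.measurable_ofReal.const_mul z).neg)
      refine AEStronglyMeasurable.congr ((hmeasf.mul hexp).aestronglyMeasurable) ?_
      · filter_upwards [self_mem_ae_restrict (measurableSet_Ioi : MeasurableSet (Set.Ioi (0:ℝ)))]
          with t ht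
        rw [hgf t (le_of_lt ht)]
        rfl
    · filter_upwards [self_mem_ae_restrict (measurableSet_Ioi : MeasurableSet (Set.Ioi (0:ℝ)))]
        with t ht
      rw [norm_mul, hre t]
      exact mul_le_mul_of_nonneg_right (hgb t ht.le) (Real.exp_pos _).le
  -- decompose the half line
  have hU : Set.Ioi (0 : ℝ) = ⋃ n : ℕ, Set.Ioc ((n : ℝ) * τ) (((n : ℝ) + 1) * τ) := by
    ext t
    simp only [Set.mem_Ioi, Set.mem_iUnion, Set.mem_Ioc]
    constructor
    · intro ht
      have hpos : 0 < t / τ := div_pos ht hτ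
      have h1 : 1 ≤ ⌈t / τ⌉₊ := Nat.one_le_ceil_iff.mpr hpos
      refine ⟨⌈t / τ⌉₊ - 1, ?_, ?_⟩
      · have hc : ((⌈t / τ⌉₊ - 1 : ℕ) : ℝ) = (⌈t / τ⌉₊ : ℝ) - 1 := by
          push_cast [h1]; ring
        rw [hc]
        have h2 : ((⌈t / τ⌉₊ : ℝ)) < t / τ + 1 := Nat.ceil_lt_add_one hpos.le
        have : ((⌈t / τ⌉₊ : ℝ) - 1) < t / τ := by linarith
        calc ((⌈t / τ⌉₊ : ℝ) - 1) * τ < (t / τ) * τ := by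
              exact mul_lt_mul_of_pos_right this hτ
          _ = t := by field_simp
      · have hc : ((⌈t / τ⌉₊ - 1 : ℕ) : ℝ) + 1 = (⌈t / τ⌉₊ : ℝ) := by
          push_cast [h1]; ring
        rw [hc]
        calc t = (t / τ) * τ := by field_simp
          _ ≤ ((⌈t / τ⌉₊ : ℝ)) * τ := mul_le_mul_of_nonneg_right (Nat.le_ceil _) hτ.le
    · rintro ⟨n, hn1, -⟩
      exact lt_of_le_of_lt (by positivity) hn1
  have hdisj : Pairwise (Function.onFun Disjoint
      fun n : ℕ => Set.Ioc ((n : ℝ) * τ) (((n : ℝ) + 1) * τ)) := by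
    intro m n hmn
    simp only [Function.onFun]
    rw [Set.Ioc_disjoint_Ioc]
    rcases hmn.lt_or_gt with h | h
    · have : ((m : ℝ) + 1) ≤ n := by exact_mod_cast h
      calc min (((m : ℝ) + 1) * τ) (((n : ℝ) + 1) * τ) ≤ ((m : ℝ) + 1) * τ := min_le_left _ _
        _ ≤ (n : ℝ) * τ := mul_le_mul_of_nonneg_right this hτ.le
        _ ≤ max ((m : ℝ) * τ) ((n : ℝ) * τ) := le_max_right _ _
    · have : ((n : ℝ) + 1) ≤ m := by exact_mod_cast h
      calc min (((m : ℝ) + 1) * τ) (((n : ℝ) + 1) * τ) ≤ ((n : ℝ) + 1) * τ := min_le_right _ _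
        _ ≤ (m : ℝ) * τ := mul_le_mul_of_nonneg_right this hτ.le
        _ ≤ max ((m : ℝ) * τ) ((n : ℝ) * τ) := le_max_left _ _
  rw [hU] at hInt ⊢
  rw [integral_iUnion (fun _ => measurableSet_Ioc) hdisj hInt]
  -- per-interval closed form
  set w : ℕ → ℂ := fun n => Complex.exp (-((n : ℂ) * τ * z)) with hw_def
  have hseg : ∀ n : ℕ,
      ∫ t in Set.Ioc ((n : ℝ) * τ) (((n : ℝ) + 1) * τ), g t * Complex.exp (-(z * t))
        = (gs n / z + (gs (n + 1) - gs n) / (τ * z ^ 2)) * w n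
          - (gs (n + 1) / z + (gs (n + 1) - gs n) / (τ * z ^ 2)) * w (n + 1) := by
    intro n
    have hab : (n : ℝ) * τ ≤ ((n : ℝ) + 1) * τ := by nlinarith
    rw [← intervalIntegral.integral_of_le hab]
    rw [intervalIntegral.integral_congr
      (g := fun t => (gs n + (gs (n + 1) - gs n) * (((t - (n : ℝ) * τ) / τ : ℝ) : ℂ))
        * Complex.exp (-(z * t)))
      (fun t ht => by rw [hg n t (by rwa [Set.uIcc_of_le hab] at ht)]; push_cast; ring)]
    rw [show ((n : ℝ) + 1) * τ = (n : ℝ) * τ + τ by ring]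
    rw [lt_seg_integral z hz0 τ hτ.ne' ((n : ℝ) * τ) (gs n) (gs (n + 1) - gs n)]
    have e0 : Complex.exp (-(z * (((n : ℝ) * τ : ℝ) : ℂ))) = w n := by
      rw [hw_def]; congr 1; push_cast; ring
    have e1 : Complex.exp (-(z * ((((n : ℝ) * τ : ℝ) : ℂ) + (τ : ℂ)))) = w (n + 1) := by
      rw [hw_def]; congr 1; push_cast; ring
    rw [e0, e1]
    ring_nf
  rw [tsum_congr hseg]
  -- summability
  set A : ℕ → ℂ := fun n => gs n * w n with hA_def
  have hwnorm : ∀ n : ℕ, ‖w n‖ = Real.exp (-(τ * z.re)) ^ n := by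
    intro n
    rw [hw_def]
    simp only
    rw [Complex.norm_exp, ← Real.exp_nat_mul]
    congr 1
    have : ((n : ℂ) * τ * z).re = (n : ℝ) * τ * z.re := by
      simp [Complex.mul_re]
    simp only [Complex.neg_re, this]
    ring
  have hr1 : Real.exp (-(τ * z.re)) < 1 := by
    rw [Real.exp_lt_one_iff]
    nlinarith
  have hA : Summable A := by
    apply Summable.of_norm_bounded (g := fun n => M * Real.exp (-(τ * z.re)) ^ n)
      ((summable_geometric_of_lt_one (Real.exp_pos _).le hr1).mul_left M)
    intro n
    rw [hA_def]
    simp only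
    rw [norm_mul, hwnorm n]
    exact mul_le_mul_of_nonneg_right (hbdd n) (pow_nonneg (Real.exp_pos _).le n)
  have hA1 : Summable fun n => A (n + 1) := (summable_nat_add_iff 1).2 hA
  have hAsum1 : ∑' n : ℕ, A (n + 1) = ∑' n : ℕ, A n := by
    have h0 : A 0 = 0 := by rw [hA_def]; simp [hg0]
    rw [Summable.tsum_eq_zero_add hA, h0, zero_add]
  -- per-n algebraic identity
  set α : ℂ := 1 / z - 1 / (τ * z ^ 2) + Complex.exp (-(τ * z)) / (τ * z ^ 2) with hα
  set β : ℂ := -(1 / z) - 1 / (τ * z ^ 2) + Complex.exp (τ * z) / (τ * z ^ 2) with hβ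
  have hPn : ∀ n : ℕ,
      (gs n / z + (gs (n + 1) - gs n) / (τ * z ^ 2)) * w n
        - (gs (n + 1) / z + (gs (n + 1) - gs n) / (τ * z ^ 2)) * w (n + 1)
      = α * A n + β * A (n + 1) := by
    intro n
    have hw1 : w (n + 1) = Complex.exp (-(τ * z)) * w n := by
      rw [hw_def]
      simp only
      rw [← Complex.exp_add]
      congr 1
      push_cast
      ring
    have hw2 : w n = Complex.exp (τ * z) * w (n + 1) := by
      rw [hw_def]
      simp only
      rw [← Complex.exp_add]
      congr 1
      push_cast
      ring
    rw [hA_def, hα, hβ]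
    simp only
    linear_combination (gs (n + 1) / (τ * z ^ 2)) * hw2 + (gs n / (τ * z ^ 2)) * hw1
  rw [tsum_congr hPn, Summable.tsum_add (hA.mul_left α) (hA1.mul_left β), tsum_mul_left, tsum_mul_left,
    hAsum1, ← add_mul]
  congr 1
  have hζξ : Complex.exp (-(τ * z)) * Complex.exp (τ * z) = 1 := by
    rw [← Complex.exp_add]
    simp
  rw [hα, hβ]
  field_simp [hτ', hz0]
  ring_nf
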